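/- Let $m, n$ be positive sequences with $m_0 = n_0 = 1$, $m_{k+1}/m_k \to \infty$, $n_{k+1}/n_k \to \infty$, and suppose there exists $C \ge 1$ such that $m_{j+1}/m_j \le C\, n_{k+1}/n_k$ whenever $j \le k$. Then $\bar{\Gamma}_n(Ct) \le \underline{\Gamma}_m(t)$ for all $t > 0$, where $\bar{\Gamma}_n(s) := \min\{k : \inf_j n_j s^j = n_k s^k\}$ and $\underline{\Gamma}_m(t) := \min\{k : m_{k+1}/m_k \ge 1/t\}$. -/

import Mathlib

open Filter

theorem stmt8 (m n : ℕ → ℝ) (hmpos : ∀ k, 0 < m k) (hnpos : ∀ k, 0 < n k)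
    (hm0 : m 0 = 1) (hn0 : n 0 = 1)
    (hmquot : Tendsto (fun k => m (k + 1) / m k) atTop atTop)
    (hnquot : Tendsto (fun k => n (k + 1) / n k) atTop atTop)
    (C : ℝ) (hC : 1 ≤ C)
    (hcomp : ∀ j k : ℕ, j ≤ k → m (j + 1) / m j ≤ C * (n (k + 1) / n k))
    (Γlowm Γupn : ℝ → ℕ)
    (hΓlowm : ∀ t > (0 : ℝ), Γlowm t = sInf {k : ℕ | 1 / t ≤ m (k + 1) / m k})
    (hΓupn : ∀ s > (0 : ℝ), Γupn s = sInf {k : ℕ | (⨅ j : ℕ, n j * s ^ j) = n k * s ^ k}) :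
    ∀ t > (0 : ℝ), Γupn (C * t) ≤ Γlowm t := by
  intro t ht
  have hs : (0 : ℝ) < C * t := mul_pos (lt_of_lt_of_le one_pos hC) ht
  set s : ℝ := C * t with hsdef
  set f : ℕ → ℝ := fun k => n k * s ^ k with hf
  set k₀ : ℕ := Γlowm t with hk0
  -- k₀ is in the set
  have hSne : {k : ℕ | 1 / t ≤ m (k + 1) / m k}.Nonempty :=
    (hmquot.eventually_ge_atTop (1 / t)).exists
  have hk0mem : 1 / t ≤ m (k₀ + 1) / m k₀ := by
    have := Nat.sInf_mem hSne
    rw [hk0, hΓlowm t ht]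
    exact this
  -- monotone step past k₀
  have hstep : ∀ k, k₀ ≤ k → f k ≤ f (k + 1) := by
    intro k hk
    have h1 : 1 / t ≤ C * (n (k + 1) / n k) := hk0mem.trans (hcomp k₀ k hk)
    have hnk := hnpos k
    have hnk1 := hnpos (k + 1)
    have hkey : n k ≤ n (k + 1) * s := by
      have h2 : 1 / t * (t * n k) ≤ C * (n (k + 1) / n k) * (t * n k) :=
        mul_le_mul_of_nonneg_right h1 (mul_pos ht hnk).le
      rw [hsdef]
      field_simp at h2
      have h3 : C * n (k + 1) * (t * n k) / n k = n (k + 1) * (C * t) := by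
        field_simp
      linarith [h2]
    have hpow : (0:ℝ) < s ^ k := pow_pos hs k
    calc f k = n k * s ^ k := rfl
      _ ≤ n (k + 1) * s * s ^ k := mul_le_mul_of_nonneg_right hkey hpow.le
      _ = f (k + 1) := by simp [hf, pow_succ]; ring
  have hmono : ∀ j, k₀ ≤ j → f k₀ ≤ f j := by
    intro j hj
    induction j, hj using Nat.le_induction with
    | base => exact le_refl _
    | succ j hj ih => exact ih.trans (hstep j hj)
  -- min over range (k₀+1)
  obtain ⟨k₁, hk₁mem, hk₁min⟩ :=
    (Finset.range (k₀ + 1)).exists_min_image f ⟨k₀, Finset.self_mem_range_succ k₀⟩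
  have hk₁le : k₁ ≤ k₀ := Nat.lt_succ_iff.mp (Finset.mem_range.mp hk₁mem)
  have hlb : ∀ j, f k₁ ≤ f j := by
    intro j
    rcases Nat.lt_or_ge j (k₀ + 1) with h | h
    · exact hk₁min j (Finset.mem_range.mpr h)
    · exact (hk₁min k₀ (Finset.self_mem_range_succ k₀)).trans (hmono j (Nat.le_of_succ_le h))
  have hiInf : (⨅ j : ℕ, n j * s ^ j) = n k₁ * s ^ k₁ := by
    have hbdd : BddBelow (Set.range f) := ⟨f k₁, by rintro x ⟨j, rfl⟩; exact hlb j⟩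
    exact le_antisymm (ciInf_le hbdd k₁) (le_ciInf hlb)
  rw [hΓupn s hs]
  exact le_trans (Nat.sInf_le hiInf) hk₁le
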